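/- For the reduced system at infinity, the equilibrium P₃ = (σ₂, σ₄, σ₅) = (M(3γ−4)/(√6(γ−2)), 0, 0) lies in the closed unit ball iff M²(3γ−4)² ≤ 6(γ−2)², and at P₃ the deceleration parameter equals q = (−M²(4−3γ)² + 2γ(3γ−8) + 8)/(4(γ−2)); in particular q < 0 iff 0 < γ < 2/3 and M² < (2γ(3γ−8)+8)/(4−3γ)². -/
import Mathlib


open Filter Set Topology

/-- The equilibrium `P₃ = (M(3γ−4)/(√6(γ−2)), 0, 0)` lies in the closed unit ball
iff `M²(3γ−4)² ≤ 6(γ−2)²`, its deceleration parameter equals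
`(−M²(4−3γ)² + 2γ(3γ−8) + 8)/(4(γ−2))`, and `q < 0` iff `0 < γ < 2/3` and
`M² < (2γ(3γ−8)+8)/(4−3γ)²`. -/
theorem stmt18 (γ M : ℝ) (hγ0 : 0 < γ) (hγ2 : γ < 2) (hγ43 : γ ≠ 4/3) :
    let q : ℝ × ℝ × ℝ → ℝ := fun σ =>
      -(3/2) * (γ - 2) * σ.1^2 - (3*γ/2) * σ.2.1^2
        + (1/2) * (4 - 3*γ) * σ.2.2^2 + (1/2) * (3*γ - 2)
    let P₃ : ℝ × ℝ × ℝ := (M * (3*γ - 4) / (Real.sqrt 6 * (γ - 2)), 0, 0)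
    (P₃.1^2 + P₃.2.1^2 + P₃.2.2^2 ≤ 1 ↔ M^2 * (3*γ - 4)^2 ≤ 6 * (γ - 2)^2) ∧
    q P₃ = (-M^2 * (4 - 3*γ)^2 + 2*γ*(3*γ - 8) + 8) / (4 * (γ - 2)) ∧
    (q P₃ < 0 ↔ (0 < γ ∧ γ < 2/3 ∧ M^2 < (2*γ*(3*γ - 8) + 8) / (4 - 3*γ)^2)) := by
  intro q P₃
  have hd : γ - 2 ≠ 0 := by intro h; linarith [sub_eq_zero.mp h]
  have h6 : Real.sqrt 6 ^ 2 = 6 := Real.sq_sqrt (by norm_num)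
  have hs : Real.sqrt 6 ≠ 0 := by
    intro h; rw [h] at h6; norm_num at h6
  have hP : P₃.1 ^ 2 = M ^ 2 * (3*γ - 4) ^ 2 / (6 * (γ - 2) ^ 2) := by
    show (M * (3*γ - 4) / (Real.sqrt 6 * (γ - 2))) ^ 2 = _
    rw [div_pow, mul_pow, mul_pow, h6]
  have hpos : (0:ℝ) < 6 * (γ - 2) ^ 2 := by positivity
  have hq : q P₃ = (-M^2 * (4 - 3*γ)^2 + 2*γ*(3*γ - 8) + 8) / (4 * (γ - 2)) := by
    show -(3/2) * (γ - 2) * P₃.1 ^ 2 - (3*γ/2) * (0:ℝ)^2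
        + (1/2) * (4 - 3*γ) * (0:ℝ)^2 + (1/2) * (3*γ - 2) = _
    rw [hP]
    field_simp
    ring
  refine ⟨?_, hq, ?_⟩
  · show P₃.1 ^ 2 + (0:ℝ)^2 + (0:ℝ)^2 ≤ 1 ↔ _
    rw [hP]
    rw [show M ^ 2 * (3*γ - 4) ^ 2 / (6 * (γ - 2) ^ 2) + 0^2 + 0^2
        = M ^ 2 * (3*γ - 4) ^ 2 / (6 * (γ - 2) ^ 2) by ring]
    exact div_le_one hpos
  · rw [hq]
    have hden : 4 * (γ - 2) < 0 := by linarith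
    rw [div_neg_iff]
    constructor
    · rintro (⟨h1, h2⟩ | ⟨h1, h2⟩)
      · have h43 : γ < 2/3 := by nlinarith [sq_nonneg M, sq_nonneg (4 - 3*γ)]
        have h4 : (0:ℝ) < (4 - 3*γ)^2 := pow_pos (by linarith) 2
        refine ⟨hγ0, h43, ?_⟩
        rw [lt_div_iff₀ h4]
        nlinarith
      · linarith
    · rintro ⟨_, h43, hM⟩
      have h4 : (0:ℝ) < (4 - 3*γ)^2 := pow_pos (by linarith) 2
      rw [lt_div_iff₀ h4] at hM
      left
      constructor <;> nlinarith
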